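/- arXiv:1209.6256 — 4 statements merged into one kernel-verified Lean document; each statement's English description precedes it below -/
import Mathlib

section
/- Let R be an associative ring, S a nonempty subset of R, and z a central element of R. Define S^{(1)} = R and, for i ≥ 2, let S^{(i)} be the two-sided ideal of R generated by all elements [a,b] = ab - ba with a ∈ S^{(i-1)} and b ∈ S. If S^{(i)} ⊆ zR for some i ≥ 1, then for all j > 0 we have S^{(i+j)} ⊆ z·S^{(j)}. -/
/-- The two-sided ideal (as a set) generated by a subset `T` of a ring. -/
def ringSpan {R : Type*} [Ring R] (T : Set R) : Set R :=
  (AddSubgroup.closure {x : R | ∃ r s : R, ∃ t ∈ T, x = r * t * s} : AddSubgroup R)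

/-- The strong Lie lower central series of a subset `S`:
`S^{(1)} = R`, and `S^{(i+1)}` is the two-sided ideal generated by all `[a,b]`
with `a ∈ S^{(i)}`, `b ∈ S`. -/
def SLC {R : Type*} [Ring R] (S : Set R) : ℕ → Set R
  | 0 => Set.univ
  | 1 => Set.univ
  | (n+2) => ringSpan {x | ∃ a ∈ SLC S (n+1), ∃ b ∈ S, x = a * b - b * a}

/-- If `S^{(i)} ⊆ zR` for a central element `z`, then `S^{(i+j)} ⊆ z·S^{(j)}` for all `j > 0`. -/
theorem stmt_0 {R : Type*} [Ring R] (S : Set R) (hS : S.Nonempty)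
    (z : R) (hz : ∀ r : R, z * r = r * z)
    (i : ℕ) (hi : 1 ≤ i) (h : SLC S i ⊆ {x : R | ∃ r : R, x = z * r}) :
    ∀ j : ℕ, 0 < j → SLC S (i + j) ⊆ {x : R | ∃ s ∈ SLC S j, x = z * s} := by
  intro j
  induction j with
  | zero => exact fun hj => absurd hj (lt_irrefl 0)
  | succ j ih =>
    intro _
    have key : ∀ a ∈ SLC S (i + j), ∃ a' ∈ SLC S j, a = z * a' := by
      cases j with
      | zero =>
        intro a ha
        obtain ⟨r, hr⟩ := h (by simpa using ha)
        exact ⟨r, trivial, hr⟩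
      | succ m =>
        intro a ha
        exact ih (Nat.succ_pos m) ha
    have memgen : ∀ w ∈ {x : R | ∃ a ∈ SLC S j, ∃ b ∈ S, x = a * b - b * a},
        ∀ r s : R, r * w * s ∈ SLC S (j + 1) := by
      cases j with
      | zero => intro w _ r s; trivial
      | succ m =>
        intro w hw r s
        exact AddSubgroup.subset_closure ⟨r, s, w, hw, rfl⟩
    obtain ⟨A, hA⟩ : ∃ A : AddSubgroup R, (A : Set R) = SLC S (j + 1) := by
      cases j with
      | zero => exact ⟨⊤, rfl⟩
      | succ m => exact ⟨_, rfl⟩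
    obtain ⟨k, hk⟩ : ∃ k, i + j = k + 1 := ⟨i + j - 1, by omega⟩
    have hiSucc : i + (j + 1) = k + 2 := by omega
    rw [hiSucc]
    show ringSpan _ ⊆ _
    have hsub : {x : R | ∃ s ∈ SLC S (j + 1), x = z * s} =
        ↑(A.map (AddMonoidHom.mulLeft z)) := by
      ext x
      simp only [Set.mem_setOf_eq, AddSubgroup.coe_map, Set.mem_image, SetLike.mem_coe]
      constructor
      · rintro ⟨s, hs, rfl⟩
        exact ⟨s, by rw [← SetLike.mem_coe, hA]; exact hs, rfl⟩
      · rintro ⟨s, hs, rfl⟩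
        exact ⟨s, by rw [← hA]; exact hs, rfl⟩
    rw [hsub]
    refine AddSubgroup.closure_le _ |>.2 ?_
    rintro x ⟨r, s, t, ⟨a, ha, b, hb, rfl⟩, rfl⟩
    rw [show k + 1 = i + j from hk.symm] at ha
    obtain ⟨a', ha', rfl⟩ := key a ha
    have hw : z * a' * b - b * (z * a') = z * (a' * b - b * a') := by
      rw [mul_sub]
      congr 1
      · rw [mul_assoc]
      · rw [← mul_assoc, ← hz b, mul_assoc]
    have heq : r * (z * a' * b - b * (z * a')) * s = z * (r * (a' * b - b * a') * s) := by
      rw [hw, ← mul_assoc, ← mul_assoc, ← hz r, mul_assoc z r _, mul_assoc z]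
    rw [heq]
    exact AddSubgroup.mem_map.2 ⟨r * (a' * b - b * a') * s,
      by rw [← SetLike.mem_coe, hA]; exact memgen _ ⟨a', ha', b, hb, rfl⟩ r s, rfl⟩
end

section
/- Let R be an associative ring with unity and S a nonempty subset of R whose set of units U(S) = S ∩ U(R) is nonempty. If S is strongly Lie nilpotent with S^{(n)} = 0, then γ_n(U(S)) ⊆ 1 + S^{(n)} for all n ≥ 2; in particular U(S) is a nilpotent set with nilpotency class cl(U(S)) < t^L(S), where t^L(S) is the minimal n with S^{(n)} = 0. -/
/-- The lower central series of a subset `H` of a group: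
`γ_1(H) = H` and `γ_{n+1}(H)` is the subgroup generated by all commutators
`(x,y) = x⁻¹y⁻¹xy` with `x ∈ γ_n(H)`, `y ∈ H`. -/
def gammaG {G : Type*} [Group G] (H : Set G) : ℕ → Set G
  | 0 => H
  | 1 => H
  | (n+2) => (Subgroup.closure
      {z | ∃ x ∈ gammaG H (n+1), ∃ y ∈ H, z = x⁻¹ * y⁻¹ * x * y} : Subgroup G)

section Aux

variable {R : Type*} [Ring R]

lemma mem_ringSpan {T : Set R} {t : R} (r s : R) (ht : t ∈ T) :
    r * t * s ∈ ringSpan T :=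
  AddSubgroup.subset_closure ⟨r, s, t, ht, rfl⟩

lemma ringSpan_zero (T : Set R) : (0 : R) ∈ ringSpan T :=
  (AddSubgroup.closure _).zero_mem

lemma ringSpan_add {T : Set R} {x y : R} (hx : x ∈ ringSpan T) (hy : y ∈ ringSpan T) :
    x + y ∈ ringSpan T :=
  (AddSubgroup.closure _).add_mem hx hy

lemma ringSpan_neg {T : Set R} {x : R} (hx : x ∈ ringSpan T) : -x ∈ ringSpan T :=
  (AddSubgroup.closure _).neg_mem hx

lemma ringSpan_mul_left {T : Set R} (r : R) {x : R} (hx : x ∈ ringSpan T) :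
    r * x ∈ ringSpan T := by
  induction hx using AddSubgroup.closure_induction with
  | mem z hz =>
    obtain ⟨a, b, t, ht, rfl⟩ := hz
    have := mem_ringSpan (T := T) (r * a) b ht
    simpa [mul_assoc] using this
  | zero => simpa using ringSpan_zero T
  | add a b _ _ ha hb => simpa [mul_add] using ringSpan_add ha hb
  | neg a _ ha => simpa [mul_neg] using ringSpan_neg ha

lemma ringSpan_mul_right {T : Set R} (r : R) {x : R} (hx : x ∈ ringSpan T) :
    x * r ∈ ringSpan T := by
  induction hx using AddSubgroup.closure_induction with
  | mem z hz =>
    obtain ⟨a, b, t, ht, rfl⟩ := hz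
    have := mem_ringSpan (T := T) a (b * r) ht
    simpa [mul_assoc] using this
  | zero => simpa using ringSpan_zero T
  | add a b _ _ ha hb => simpa [add_mul] using ringSpan_add ha hb
  | neg a _ ha => simpa [neg_mul] using ringSpan_neg ha

variable {S : Set R}

lemma slc_zero (n : ℕ) : (0 : R) ∈ SLC S n := by
  match n with
  | 0 => exact Set.mem_univ _
  | 1 => exact Set.mem_univ _
  | (n+2) => exact ringSpan_zero _

lemma slc_add {n : ℕ} {x y : R} (hx : x ∈ SLC S n) (hy : y ∈ SLC S n) :
    x + y ∈ SLC S n := by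
  match n with
  | 0 => exact Set.mem_univ _
  | 1 => exact Set.mem_univ _
  | (n+2) => exact ringSpan_add hx hy

lemma slc_neg {n : ℕ} {x : R} (hx : x ∈ SLC S n) : -x ∈ SLC S n := by
  match n with
  | 0 => exact Set.mem_univ _
  | 1 => exact Set.mem_univ _
  | (n+2) => exact ringSpan_neg hx

lemma slc_mul_left {n : ℕ} (r : R) {x : R} (hx : x ∈ SLC S n) : r * x ∈ SLC S n := by
  match n with
  | 0 => exact Set.mem_univ _
  | 1 => exact Set.mem_univ _
  | (n+2) => exact ringSpan_mul_left r hx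

lemma slc_mul_right {n : ℕ} (r : R) {x : R} (hx : x ∈ SLC S n) : x * r ∈ SLC S n := by
  match n with
  | 0 => exact Set.mem_univ _
  | 1 => exact Set.mem_univ _
  | (n+2) => exact ringSpan_mul_right r hx

/-- The units `u` with `u - 1 ∈ SLC S n` form a subgroup of `Rˣ`. -/
def slcUnits (S : Set R) (n : ℕ) : Subgroup Rˣ where
  carrier := {u : Rˣ | ((u : R) - 1) ∈ SLC S n}
  one_mem' := by simpa using slc_zero n
  mul_mem' := by
    intro a b ha hb
    have h : ((a * b : Rˣ) : R) - 1 =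
        ((a : R) - 1) * ((b : R) - 1) + (((a : R) - 1) + ((b : R) - 1)) := by
      push_cast
      noncomm_ring
    show ((a * b : Rˣ) : R) - 1 ∈ SLC S n
    rw [h]
    exact slc_add (slc_mul_right _ ha) (slc_add ha hb)
  inv_mem' := by
    intro a ha
    have h : ((a⁻¹ : Rˣ) : R) - 1 = -((a⁻¹ : Rˣ) * ((a : R) - 1)) := by
      rw [mul_sub, Units.inv_mul, mul_one, neg_sub]
    show ((a⁻¹ : Rˣ) : R) - 1 ∈ SLC S n
    rw [h]
    exact slc_neg (slc_mul_left _ ha)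

/-- The key commutator computation. -/
lemma comm_mem {n : ℕ} {x y : Rˣ} (hx : ((x : R) - 1) ∈ SLC S (n + 1))
    (hy : (y : R) ∈ S) :
    ((x⁻¹ * y⁻¹ * x * y : Rˣ) : R) - 1 ∈ SLC S (n + 2) := by
  have hgen : (x : R) * y - (y : R) * x ∈ SLC S (n + 2) := by
    show _ ∈ ringSpan _
    have h := mem_ringSpan
      (T := {z : R | ∃ a ∈ SLC S (n+1), ∃ b ∈ S, z = a * b - b * a}) 1 1
      (t := ((x : R) - 1) * y - (y : R) * ((x : R) - 1))
      ⟨(x : R) - 1, hx, (y : R), hy, rfl⟩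
    have he : (1 : R) * (((x : R) - 1) * y - (y : R) * ((x : R) - 1)) * 1 =
        (x : R) * y - (y : R) * x := by noncomm_ring
    rwa [he] at h
  have h : ((x⁻¹ * y⁻¹ * x * y : Rˣ) : R) - 1 =
      (x⁻¹ : Rˣ) * ((y⁻¹ : Rˣ) * ((x : R) * y - (y : R) * x)) := by
    push_cast
    rw [mul_sub, mul_sub, Units.inv_mul_cancel_left, ← mul_assoc, ← mul_assoc,
      Units.inv_mul]
  rw [h]
  exact slc_mul_left _ (slc_mul_left _ hgen)

lemma key (n : ℕ) :
    ∀ u ∈ gammaG {u : Rˣ | (u : R) ∈ S} (n + 2), ((u : R) - 1) ∈ SLC S (n + 2) := by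
  induction n with
  | zero =>
    intro u hu
    have : u ∈ slcUnits S 2 := by
      refine Subgroup.closure_le (slcUnits S 2) |>.mpr ?_ hu
      rintro z ⟨x, hx, y, hy, rfl⟩
      exact comm_mem (n := 0) (Set.mem_univ _) hy
    exact this
  | succ n ih =>
    intro u hu
    have : u ∈ slcUnits S (n + 3) := by
      refine Subgroup.closure_le (slcUnits S (n + 3)) |>.mpr ?_ hu
      rintro z ⟨x, hx, y, hy, rfl⟩
      exact comm_mem (ih x hx) hy
    exact this

end Aux

/-- If `S` is strongly Lie nilpotent then `γ_n(U(S)) ⊆ 1 + S^{(n)}` for `n ≥ 2`; in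
particular the set of units `U(S) = S ∩ U(R)` is nilpotent and `cl(U(S)) < t^L(S)`. -/
theorem stmt_3 {R : Type*} [Ring R] [Nontrivial R] (S : Set R) (hS : S.Nonempty)
    (hU : {u : Rˣ | (u : R) ∈ S}.Nonempty)
    (hnil : ∃ n : ℕ, SLC S n = {0}) :
    (∀ n : ℕ, 2 ≤ n → ∀ u ∈ gammaG {u : Rˣ | (u : R) ∈ S} n, ((u : R) - 1) ∈ SLC S n) ∧
    (∃ c : ℕ, gammaG {u : Rˣ | (u : R) ∈ S} (c + 1) ⊆ {1}) ∧
    sInf {c : ℕ | gammaG {u : Rˣ | (u : R) ∈ S} (c + 1) ⊆ {1}} <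
      sInf {n : ℕ | SLC S n = {0}} := by
  have main : ∀ n : ℕ, 2 ≤ n →
      ∀ u ∈ gammaG {u : Rˣ | (u : R) ∈ S} n, ((u : R) - 1) ∈ SLC S n := by
    intro n hn
    obtain ⟨m, rfl⟩ := Nat.exists_eq_add_of_le hn
    rw [add_comm]
    exact key m
  refine ⟨main, ?_⟩
  set n₀ := sInf {n : ℕ | SLC S n = {0}} with hn₀def
  have hmem : SLC S n₀ = {0} := Nat.sInf_mem hnil
  have h2 : 2 ≤ n₀ := by
    by_contra h
    push_neg at h
    interval_cases n₀
    · have h1 : (1 : R) ∈ SLC S 0 := Set.mem_univ _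
      rw [hmem] at h1
      exact one_ne_zero (Set.mem_singleton_iff.mp h1)
    · have h1 : (1 : R) ∈ SLC S 1 := Set.mem_univ _
      rw [hmem] at h1
      exact one_ne_zero (Set.mem_singleton_iff.mp h1)
  have hsub : gammaG {u : Rˣ | (u : R) ∈ S} ((n₀ - 1) + 1) ⊆ {1} := by
    have he : (n₀ - 1) + 1 = n₀ := by omega
    rw [he]
    intro u hu
    have := main n₀ h2 u hu
    rw [hmem] at this
    have : (u : R) = 1 := sub_eq_zero.mp this
    exact Units.ext this
  refine ⟨⟨n₀ - 1, hsub⟩, ?_⟩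
  calc sInf {c : ℕ | gammaG {u : Rˣ | (u : R) ∈ S} (c + 1) ⊆ {1}} ≤ n₀ - 1 :=
        Nat.sInf_le hsub
    _ < n₀ := by omega
end

section
/- Let F be a field of characteristic different from 2, G a group, and σ : G → {±1} an orientation with kernel N. Then the set (FG)^- of skew-symmetric elements under the oriented classical involution is spanned as an F-module by {g + g^{-1} : g ∈ G \ N} ∪ {g - g^{-1} : g ∈ N, g^2 ≠ 1}. -/
/-- The oriented classical involution of the group algebra `FG` attached to an
orientation `σ : G → {±1}`: `(Σ α_g g)^* = Σ α_g σ(g) g⁻¹`. -/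
noncomputable def orInv {F : Type*} [Field F] {G : Type*} [Group G] (σ : G →* ℤˣ)
    (α : MonoidAlgebra F G) : MonoidAlgebra F G :=
  MonoidAlgebra.ofCoeff (α.coeff.sum fun g a => Finsupp.single g⁻¹ (((σ g : ℤ) : F) * a))

section aux

variable {F : Type*} [Field F] {G : Type*} [Group G] (σ : G →* ℤˣ)

lemma orInv_single (g : G) (a : F) :
    orInv σ (MonoidAlgebra.single g a) = MonoidAlgebra.single g⁻¹ (((σ g : ℤ) : F) * a) := by
  unfold orInv
  rw [MonoidAlgebra.coeff_single, Finsupp.sum_single_index]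
  · rfl
  rw [mul_zero, Finsupp.single_zero]

/-- `orInv` as a linear map. -/
noncomputable def orInvL : MonoidAlgebra F G →ₗ[F] MonoidAlgebra F G where
  toFun α := MonoidAlgebra.ofCoeff
    ((Finsupp.lsum F (fun g : G => (((σ g : ℤ) : F)) • Finsupp.lsingle g⁻¹) :
      (G →₀ F) →ₗ[F] (G →₀ F)) α.coeff)
  map_add' x y := by rw [MonoidAlgebra.coeff_add, map_add, MonoidAlgebra.ofCoeff_add]
  map_smul' c x := by rw [MonoidAlgebra.coeff_smul, map_smul, MonoidAlgebra.ofCoeff_smul]; rfl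

lemma orInvL_apply (α : MonoidAlgebra F G) : orInvL σ α = orInv σ α := by
  unfold orInvL orInv
  show MonoidAlgebra.ofCoeff _ = MonoidAlgebra.ofCoeff _
  congr 1
  erw [Finsupp.lsum_apply]
  refine Finsupp.sum_congr fun g _ => ?_
  erw [LinearMap.smul_apply, Finsupp.lsingle_apply, Finsupp.smul_single']

lemma orInv_apply (α : MonoidAlgebra F G) (h : G) :
    (orInv σ α).coeff h = ((σ h⁻¹ : ℤ) : F) * α.coeff h⁻¹ := by
  classical
  unfold orInv
  rw [MonoidAlgebra.coeff_ofCoeff, Finsupp.sum_apply, Finsupp.sum, Finset.sum_eq_single h⁻¹]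
  · simp [Finsupp.single_apply]
  · intro g hg hne
    rw [Finsupp.single_apply, if_neg]
    intro he
    exact hne (by rw [← he, inv_inv])
  · intro hnot
    simp [Finsupp.notMem_support_iff.mp hnot]

lemma sigma_cast_ne_zero (g : G) : ((σ g : ℤ) : F) ≠ 0 := by
  rcases Int.units_eq_one_or (σ g) with h | h <;> simp [h]

end aux

/-- If `char F ≠ 2`, the skew-symmetric elements `(FG)^-` of the oriented classical
involution with orientation kernel `N = ker σ` form the `F`-span of
`{g + g⁻¹ : g ∈ G \ N} ∪ {g - g⁻¹ : g ∈ N, g² ≠ 1}`. -/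
theorem stmt_6 {F : Type*} [Field F] (h2 : ringChar F ≠ 2)
    {G : Type*} [Group G] (σ : G →* ℤˣ) :
    {α : MonoidAlgebra F G | orInv σ α = -α} =
      (Submodule.span F
        ({z : MonoidAlgebra F G | ∃ g : G, g ∉ σ.ker ∧
            z = MonoidAlgebra.of F G g + MonoidAlgebra.of F G g⁻¹} ∪
         {z : MonoidAlgebra F G | ∃ g ∈ σ.ker, g ^ 2 ≠ 1 ∧
            z = MonoidAlgebra.of F G g - MonoidAlgebra.of F G g⁻¹}) : Set (MonoidAlgebra F G)) := by
  classical
  have h2F : (2 : F) ≠ 0 := Ring.two_ne_zero h2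
  set S : Set (MonoidAlgebra F G) :=
      ({z : MonoidAlgebra F G | ∃ g : G, g ∉ σ.ker ∧
          z = MonoidAlgebra.of F G g + MonoidAlgebra.of F G g⁻¹} ∪
       {z : MonoidAlgebra F G | ∃ g ∈ σ.ker, g ^ 2 ≠ 1 ∧
          z = MonoidAlgebra.of F G g - MonoidAlgebra.of F G g⁻¹}) with hS
  apply Set.Subset.antisymm
  · -- skew ⊆ span
    intro α (hα : orInv σ α = -α)
    have hpt : ∀ h : G, ((σ h⁻¹ : ℤ) : F) * α.coeff h⁻¹ = -α.coeff h := by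
      intro h
      rw [← orInv_apply σ α h, hα]
      rfl
    have hpt' : ∀ g : G, α.coeff g⁻¹ = -(((σ g : ℤ) : F) * α.coeff g) := by
      intro g
      have := hpt g⁻¹
      rw [inv_inv] at this
      rw [this, neg_neg]
    have hsupp : ∀ g : G, g ∈ α.coeff.support → g⁻¹ ∈ α.coeff.support := by
      intro g hg
      rw [Finsupp.mem_support_iff] at hg ⊢
      rw [hpt' g]
      simp only [neg_ne_zero]
      exact mul_ne_zero (sigma_cast_ne_zero σ g) hg
    have hsingles : α.coeff.sum MonoidAlgebra.single = α := MonoidAlgebra.sum_coeff_single α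
    rw [Finsupp.sum] at hsingles
    have key : (2 : F) • α =
        ∑ g ∈ α.coeff.support, α.coeff g • (MonoidAlgebra.single g (1 : F)
          - (((σ g : ℤ) : F)) • MonoidAlgebra.single g⁻¹ (1 : F)) := by
      have e1 : ∑ g ∈ α.coeff.support, α.coeff g • MonoidAlgebra.single g (1 : F) = α := by
        conv_rhs => rw [← hsingles]
        exact Finset.sum_congr rfl fun g _ => by rw [MonoidAlgebra.smul_single', mul_one]
      have e2 : ∑ g ∈ α.coeff.support,
          α.coeff g • (((σ g : ℤ) : F)) • MonoidAlgebra.single g⁻¹ (1 : F) = -α := by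
        have estep : ∀ g ∈ α.coeff.support,
            α.coeff g • (((σ g : ℤ) : F)) • MonoidAlgebra.single g⁻¹ (1 : F)
              = -MonoidAlgebra.single g⁻¹ (α.coeff g⁻¹) := by
          intro g _
          rw [MonoidAlgebra.smul_single', mul_one, MonoidAlgebra.smul_single', hpt' g,
            ← MonoidAlgebra.single_neg, neg_neg, mul_comm]
        rw [Finset.sum_congr rfl estep, Finset.sum_neg_distrib, neg_inj]
        rw [show (∑ g ∈ α.coeff.support, MonoidAlgebra.single g⁻¹ (α.coeff g⁻¹))
            = ∑ g ∈ α.coeff.support, MonoidAlgebra.single g (α.coeff g) from ?_]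
        · exact hsingles
        · refine Finset.sum_equiv (Equiv.inv G) (fun g => ?_) (fun g _ => rfl)
          constructor
          · exact hsupp g
          · intro hg
            simpa using hsupp _ hg
      calc (2 : F) • α = α + α := by rw [two_smul]
        _ = ∑ g ∈ α.coeff.support, α.coeff g • (MonoidAlgebra.single g (1 : F)
              - (((σ g : ℤ) : F)) • MonoidAlgebra.single g⁻¹ (1 : F)) := by
            simp only [smul_sub, Finset.sum_sub_distrib, e1, e2, sub_neg_eq_add]
    have hmem : ∀ g ∈ α.coeff.support,
        (MonoidAlgebra.single g (1 : F)
          - (((σ g : ℤ) : F)) • MonoidAlgebra.single g⁻¹ (1 : F)) ∈ Submodule.span F S := by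
      intro g hg
      apply Submodule.subset_span
      rcases Int.units_eq_one_or (σ g) with hσ | hσ
      · -- g ∈ ker, generator of second type
        right
        refine ⟨g, MonoidHom.mem_ker.mpr hσ, ?_, ?_⟩
        · intro hsq
          have hginv : g⁻¹ = g := by
            rw [pow_two] at hsq
            rw [inv_eq_of_mul_eq_one_right hsq]
          have h0 := hpt' g
          rw [hginv, hσ] at h0
          simp only [Units.val_one, Int.cast_one, one_mul] at h0
          have h2g : (2 : F) * α.coeff g = 0 := by linear_combination h0
          have hzero : α.coeff g = 0 := (mul_eq_zero.mp h2g).resolve_left h2F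
          exact Finsupp.mem_support_iff.mp hg hzero
        · simp [MonoidAlgebra.of_apply, hσ]
      · -- g ∉ ker, generator of first type
        left
        refine ⟨g, ?_, ?_⟩
        · intro hker
          rw [MonoidHom.mem_ker] at hker
          rw [hker] at hσ
          exact absurd hσ (by decide)
        · simp [MonoidAlgebra.of_apply, hσ, sub_neg_eq_add]
    have hα2 : α = (2 : F)⁻¹ • ((2 : F) • α) := by
      rw [smul_smul, inv_mul_cancel₀ h2F, one_smul]
    rw [hα2, key]
    exact Submodule.smul_mem _ _ (Submodule.sum_mem _ fun g hg =>
      Submodule.smul_mem _ _ (hmem g hg))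
  · -- span ⊆ skew
    have hsub : Submodule.span F S ≤
        LinearMap.ker (orInvL (F := F) σ + LinearMap.id) := by
      rw [Submodule.span_le]
      rintro z (⟨g, hg, rfl⟩ | ⟨g, hg, _, rfl⟩)
      · have hσ : σ g = -1 := (Int.units_eq_one_or (σ g)).resolve_left fun h =>
          hg (MonoidHom.mem_ker.mpr h)
        have hσ' : σ g⁻¹ = -1 := by
          rw [map_inv, hσ]; rfl
        rw [SetLike.mem_coe, LinearMap.mem_ker, LinearMap.add_apply, LinearMap.id_apply,
          map_add, orInvL_apply, orInvL_apply]
        simp only [MonoidAlgebra.of_apply]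
        rw [orInv_single, orInv_single, hσ, hσ', inv_inv]
        simp only [Units.val_neg, Units.val_one, Int.cast_neg, Int.cast_one, neg_mul, one_mul,
          MonoidAlgebra.single_neg]
        abel
      · have hσ : σ g = 1 := MonoidHom.mem_ker.mp hg
        have hσ' : σ g⁻¹ = 1 := by rw [map_inv, hσ]; rfl
        rw [SetLike.mem_coe, LinearMap.mem_ker, LinearMap.add_apply, LinearMap.id_apply,
          map_sub, orInvL_apply, orInvL_apply]
        simp only [MonoidAlgebra.of_apply]
        rw [orInv_single, orInv_single, hσ, hσ', inv_inv]
        simp only [Units.val_one, Int.cast_one, one_mul]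
        abel
    intro α hα
    have hker := hsub hα
    rw [LinearMap.mem_ker, LinearMap.add_apply, LinearMap.id_apply, orInvL_apply] at hker
    show orInv σ α = -α
    exact eq_neg_of_add_eq_zero_left hker
end

section
/- Let F be a field of characteristic p > 2 and P a powerful finite p-group. Write D_n for the n-th dimension subgroup of P over F (so h ∈ D_n iff h - 1 ∈ Δ(P)^n). If h_i - 1 ∈ Δ(P)^{k_i} and h_j - 1 ∈ Δ(P)^{k_j} for positive integers k_i, k_j, then (h_i - 1)(h_j - 1) ≡ (h_j - 1)(h_i - 1) modulo Δ(P)^{k_i + k_j + 1}. -/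
/-- The augmentation ideal `Δ(G)` of the group algebra `FG`: the kernel of the
augmentation map sending each group element to `1` (an `F`-submodule, which is a
two-sided ideal, so that its powers make sense). -/
noncomputable def aug (F G : Type*) [Field F] [Group G] :
    Submodule F (MonoidAlgebra F G) :=
  LinearMap.ker (MonoidAlgebra.lift F F G 1).toLinearMap

section AugAux

variable {F : Type*} [Field F] {G : Type*} [Group G]

lemma aug_mem_iff {x : MonoidAlgebra F G} :
    x ∈ aug F G ↔ MonoidAlgebra.lift F F G 1 x = 0 := by
  rw [aug, LinearMap.mem_ker, AlgHom.toLinearMap_apply]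

lemma aug_of_sub_one_mem (g : G) : MonoidAlgebra.of F G g - 1 ∈ aug F G := by
  rw [aug_mem_iff, map_sub, MonoidAlgebra.lift_of, map_one]
  simp

lemma aug_mul_le : aug F G * aug F G ≤ aug F G := by
  rw [Submodule.mul_le]
  intro x hx y hy
  rw [aug_mem_iff] at *
  rw [map_mul, hx, hy, mul_zero]

lemma aug_pow_succ_le (m : ℕ) (hm : 1 ≤ m) :
    aug F G ^ (m + 1) ≤ aug F G ^ m := by
  induction m with
  | zero => omega
  | succ k ih =>
    rcases Nat.eq_zero_or_pos k with rfl | hk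
    · rw [pow_succ, pow_succ, pow_zero, one_mul]
      exact aug_mul_le
    · conv_rhs => rw [pow_succ]
      rw [pow_succ (aug F G) (k + 1)]
      exact mul_le_mul' (ih hk) le_rfl

lemma aug_pow_le {m n : ℕ} (hm : 1 ≤ m) (h : m ≤ n) :
    aug F G ^ n ≤ aug F G ^ m := by
  induction n with
  | zero => omega
  | succ k ih =>
    rcases Nat.eq_or_lt_of_le h with rfl | hlt
    · exact le_rfl
    · exact (aug_pow_succ_le k (by omega)).trans (ih (by omega))

lemma aug_le_span :
    aug F G ≤ Submodule.span F
      {x : MonoidAlgebra F G | ∃ g : G, x = MonoidAlgebra.of F G g - 1} := by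
  intro x hx
  have key : ∀ x : MonoidAlgebra F G,
      x - algebraMap F (MonoidAlgebra F G) (MonoidAlgebra.lift F F G 1 x) ∈
        Submodule.span F
          {x : MonoidAlgebra F G | ∃ g : G, x = MonoidAlgebra.of F G g - 1} := by
    intro x
    induction x using MonoidAlgebra.induction_linear with
    | zero => simpa using Submodule.zero_mem _
    | add a b ha hb =>
      rw [map_add, map_add, add_sub_add_comm]
      exact Submodule.add_mem _ ha hb
    | single g a =>
      have e1 : (MonoidAlgebra.lift F F G 1) (MonoidAlgebra.single g a) = a := by
        rw [MonoidAlgebra.lift_single]; simp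
      have e2 : (MonoidAlgebra.single g a : MonoidAlgebra F G)
          = a • MonoidAlgebra.of F G g := by
        rw [MonoidAlgebra.of_apply, MonoidAlgebra.smul_single', mul_one]
      rw [e1, Algebra.algebraMap_eq_smul_one, e2, ← smul_sub]
      exact Submodule.smul_mem _ _ (Submodule.subset_span ⟨g, rfl⟩)
  have h0 : MonoidAlgebra.lift F F G 1 x = 0 := aug_mem_iff.mp hx
  have := key x
  rw [h0, map_zero, sub_zero] at this
  exact this

end AugAux

/-- Let `P` be a powerful finite `p`-group (`P' ⊆ P^p`), `char F = p > 2`.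
If `h_i - 1 ∈ Δ(P)^{k_i}` and `h_j - 1 ∈ Δ(P)^{k_j}` then
`(h_i - 1)(h_j - 1) ≡ (h_j - 1)(h_i - 1)` modulo `Δ(P)^{k_i + k_j + 1}`. -/
theorem stmt_10 {F : Type*} [Field F] {p : ℕ} (hp : 2 < p) [CharP F p]
    {P : Type*} [Group P] [Finite P] (hPp : IsPGroup p P)
    (hpow : commutator P ≤ Subgroup.closure {z : P | ∃ h : P, z = h ^ p})
    (hi hj : P) (ki kj : ℕ) (hki : 0 < ki) (hkj : 0 < kj)
    (h1 : MonoidAlgebra.of F P hi - 1 ∈ aug F P ^ ki)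
    (h2 : MonoidAlgebra.of F P hj - 1 ∈ aug F P ^ kj) :
    (MonoidAlgebra.of F P hi - 1) * (MonoidAlgebra.of F P hj - 1) -
      (MonoidAlgebra.of F P hj - 1) * (MonoidAlgebra.of F P hi - 1)
      ∈ aug F P ^ (ki + kj + 1) := by
  haveI : NeZero p := ⟨by omega⟩
  haveI hprime : Fact p.Prime := CharP.char_is_prime_of_pos F p
  haveI : CharP (MonoidAlgebra F P) p := charP_of_injective_algebraMap' F p
  set A := aug F P with hA
  set ofm := MonoidAlgebra.of F P with hofm
  -- membership in powers of A multiplies exponents additively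
  have prodmem : ∀ {a b : MonoidAlgebra F P} {m n : ℕ},
      a ∈ A ^ m → b ∈ A ^ n → a * b ∈ A ^ (m + n) := by
    intro a b m n ha hb
    rw [pow_add]
    exact Submodule.mul_mem_mul ha hb
  have memA : ∀ {x : MonoidAlgebra F P} {m n : ℕ}, x ∈ A ^ m → m = n → x ∈ A ^ n := by
    rintro x m n h rfl; exact h
  have hA1 : ∀ g : P, ofm g - 1 ∈ A ^ 1 := by
    intro g; rw [pow_one]; exact aug_of_sub_one_mem g
  -- char p : of (h^p) - 1 = (of h - 1)^p
  have hp_pow : ∀ h : P, ofm (h ^ p) - 1 = (ofm h - 1) ^ p := by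
    intro h
    rw [sub_pow_char_of_commute _ (Commute.one_right _), one_pow, map_pow]
  -- elements of the closure of p-th powers are ≡ 1 mod A^p
  have hclos : ∀ c ∈ Subgroup.closure {z : P | ∃ h : P, z = h ^ p},
      ofm c - 1 ∈ A ^ p := by
    intro c hc
    induction hc using Subgroup.closure_induction with
    | mem z hz =>
      obtain ⟨h, rfl⟩ := hz
      rw [hp_pow]
      exact Submodule.pow_mem_pow A (aug_of_sub_one_mem h) p
    | one => simpa using Submodule.zero_mem _
    | mul a b ha hb iha ihb =>
      have e : ofm (a * b) - 1
          = (ofm a - 1) * (ofm b - 1) + (ofm a - 1) + (ofm b - 1) := by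
        rw [map_mul]; noncomm_ring
      rw [e]
      exact add_mem (add_mem (aug_pow_le (by omega) (by omega)
        (prodmem iha ihb)) iha) ihb
    | inv a ha ih =>
      have einv : ofm a⁻¹ * ofm a = 1 := by
        rw [← map_mul, inv_mul_cancel, map_one]
      have e : ofm a⁻¹ - 1 = -((ofm a⁻¹ - 1) * (ofm a - 1)) - (ofm a - 1) := by
        have expand : (ofm a⁻¹ - 1) * (ofm a - 1)
            = ofm a⁻¹ * ofm a - ofm a⁻¹ - ofm a + 1 := by noncomm_ring
        rw [expand, einv]; noncomm_ring
      rw [e]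
      refine sub_mem (neg_mem ?_) ih
      exact aug_pow_le (by omega) (by omega) (prodmem (hA1 a⁻¹) ih)
  -- the base case: brackets of group elements lie in A^p
  have hbase : ∀ g h : P,
      (ofm g - 1) * (ofm h - 1) - (ofm h - 1) * (ofm g - 1) ∈ A ^ p := by
    intro g h
    set c := (h * g)⁻¹ * (g * h) with hc
    have hcmem : ofm c - 1 ∈ A ^ p := by
      apply hclos
      apply hpow
      have hcc : c = g⁻¹ * h⁻¹ * g⁻¹⁻¹ * h⁻¹⁻¹ := by
        rw [hc]; group
      rw [hcc, commutator_def]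
      have := Subgroup.commutator_mem_commutator (Subgroup.mem_top g⁻¹) (Subgroup.mem_top h⁻¹)
      rw [commutatorElement_def] at this; exact this
    have e : (ofm g - 1) * (ofm h - 1) - (ofm h - 1) * (ofm g - 1)
        = (ofm (h * g) - 1) * (ofm c - 1) + (ofm c - 1) := by
      have l1 : (ofm g - 1) * (ofm h - 1) - (ofm h - 1) * (ofm g - 1)
          = ofm g * ofm h - ofm h * ofm g := by noncomm_ring
      have r1 : (ofm (h * g) - 1) * (ofm c - 1) + (ofm c - 1)
          = ofm (h * g) * ofm c - ofm (h * g) := by noncomm_ring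
      have e1 : ofm (h * g) * ofm c = ofm g * ofm h := by
        rw [← map_mul, ← map_mul]
        congr 1
        rw [hc]; group
      have e2 : ofm (h * g) = ofm h * ofm g := map_mul _ _ _
      rw [l1, r1, e1, e2]
    rw [e]
    refine add_mem (aug_pow_le (by omega) (by omega)
      (prodmem (hA1 (h * g)) hcmem)) hcmem
  -- extend by linearity to brackets of elements of A
  have hspan := @aug_le_span F _ P _
  have claim1 : ∀ g : P, ∀ b ∈ A, (ofm g - 1) * b - b * (ofm g - 1) ∈ A ^ p := by
    intro g b hb
    have hb' := hspan hb
    clear hb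
    induction hb' using Submodule.span_induction with
    | mem x hx =>
      obtain ⟨h, rfl⟩ := hx
      exact hbase g h
    | zero => simpa using Submodule.zero_mem _
    | add x y hx hy ihx ihy =>
      have e : (ofm g - 1) * (x + y) - (x + y) * (ofm g - 1)
          = ((ofm g - 1) * x - x * (ofm g - 1)) + ((ofm g - 1) * y - y * (ofm g - 1)) := by
        noncomm_ring
      rw [e]; exact add_mem ihx ihy
    | smul r x hx ihx =>
      have e : (ofm g - 1) * (r • x) - (r • x) * (ofm g - 1)
          = r • ((ofm g - 1) * x - x * (ofm g - 1)) := by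
        rw [mul_smul_comm, smul_mul_assoc, smul_sub]
      rw [e]; exact Submodule.smul_mem _ _ ihx
  have brktAug : ∀ a ∈ A, ∀ b ∈ A, a * b - b * a ∈ A ^ p := by
    intro a ha b hb
    have ha' := hspan ha
    clear ha
    induction ha' using Submodule.span_induction with
    | mem x hx =>
      obtain ⟨g, rfl⟩ := hx
      exact claim1 g b hb
    | zero => simpa using Submodule.zero_mem _
    | add x y hx hy ihx ihy =>
      have e : (x + y) * b - b * (x + y) = (x * b - b * x) + (y * b - b * y) := by
        noncomm_ring
      rw [e]; exact add_mem ihx ihy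
    | smul r x hx ihx =>
      have e : (r • x) * b - b * (r • x) = r • (x * b - b * x) := by
        rw [mul_smul_comm, smul_mul_assoc, smul_sub]
      rw [e]; exact Submodule.smul_mem _ _ ihx
  obtain ⟨q, rfl⟩ : ∃ q : ℕ, p = q + 3 := ⟨p - 3, by omega⟩
  -- bracket of A with A^n lands in A^(n+q+2)
  have brkt1 : ∀ (n : ℕ) (y : MonoidAlgebra F P), y ∈ A ^ n →
      ∀ a ∈ A, a * y - y * a ∈ A ^ (n + q + 2) := by
    intro n y hy
    induction hy using Submodule.pow_induction_on_left' with
    | algebraMap r =>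
      intro a ha
      have e : a * algebraMap F (MonoidAlgebra F P) r
          - algebraMap F (MonoidAlgebra F P) r * a = 0 := by
        rw [Algebra.commutes, sub_self]
      rw [e]; exact Submodule.zero_mem _
    | add x y i hx hy ihx ihy =>
      intro a ha
      have e : a * (x + y) - (x + y) * a = (a * x - x * a) + (a * y - y * a) := by
        noncomm_ring
      rw [e]; exact add_mem (ihx a ha) (ihy a ha)
    | mem_mul m hm i x hx ih =>
      intro a ha
      have e : a * (m * x) - (m * x) * a
          = (a * m - m * a) * x + m * (a * x - x * a) := by noncomm_ring
      rw [e]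
      refine add_mem (memA (prodmem (brktAug a ha m hm) hx) (by omega)) ?_
      have hm1 : m ∈ A ^ 1 := by rw [pow_one]; exact hm
      exact memA (prodmem hm1 (ih a ha)) (by omega)
  -- bracket of A^m with A^n lands in A^(m+n+q+1)
  have brkt2 : ∀ (m : ℕ) (x : MonoidAlgebra F P), x ∈ A ^ m →
      ∀ (n : ℕ) (y : MonoidAlgebra F P), y ∈ A ^ n →
      x * y - y * x ∈ A ^ (m + n + q + 1) := by
    intro m x hx
    induction hx using Submodule.pow_induction_on_left' with
    | algebraMap r =>
      intro n y hy
      have e : algebraMap F (MonoidAlgebra F P) r * y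
          - y * algebraMap F (MonoidAlgebra F P) r = 0 := by
        rw [Algebra.commutes, sub_self]
      rw [e]; exact Submodule.zero_mem _
    | add x y i hx hy ihx ihy =>
      intro n z hz
      have e : (x + y) * z - z * (x + y) = (x * z - z * x) + (y * z - z * y) := by
        noncomm_ring
      rw [e]; exact add_mem (ihx n z hz) (ihy n z hz)
    | mem_mul a ha i x hx ih =>
      intro n y hy
      have e : (a * x) * y - y * (a * x)
          = a * (x * y - y * x) + (a * y - y * a) * x := by noncomm_ring
      rw [e]
      have ha1 : a ∈ A ^ 1 := by rw [pow_one]; exact ha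
      refine add_mem (memA (prodmem ha1 (ih n y hy)) (by omega)) ?_
      exact memA (prodmem (brkt1 n y hy a ha) hx) (by omega)
  have main := brkt2 ki _ h1 kj _ h2
  exact aug_pow_le (by omega) (by omega) main
end
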